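/- For any x > 0, with probability at least 1 − √(2/π) e^{−x} the following holds simultaneously for all models M ∈ 𝓜: ‖Ψ_Mᵀ η‖² ≤ 2 σ² ‖Ψ_M‖_F² (ln p + x), where η = σ ε. Equivalently, P( sup_{M ∈ 𝓜} { ‖Ψ_Mᵀ η‖² − 2 σ² ‖Ψ_M‖_F² (ln p + x) } ≤ 0 ) ≥ 1 − √(2/π) e^{−x}. -/

import Mathlib

open MeasureTheory ProbabilityTheory Matrix Finset

noncomputable section

/-- Squared Euclidean norm of a vector in `ℝ^k`. -/
def sqnorm {k : ℕ} (v : Fin k → ℝ) : ℝ := ∑ i, v i ^ 2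

/-- Euclidean inner product on `ℝ^k`. -/
def ip {k : ℕ} (u v : Fin k → ℝ) : ℝ := ∑ i, u i * v i

/-- The `j`-th column of a matrix. -/
def colv {a b : ℕ} (B : Matrix (Fin a) (Fin b) ℝ) (j : Fin b) : Fin a → ℝ := fun i => B i j

/-- The matrix `B_M`: the columns of `B` outside `M` are replaced by zero. -/
def restr {a b : ℕ} (B : Matrix (Fin a) (Fin b) ℝ) (M : Finset (Fin b)) :
    Matrix (Fin a) (Fin b) ℝ := fun i j => if j ∈ M then B i j else 0

/-- Squared Frobenius norm of a matrix. -/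
def frob2 {a b : ℕ} (B : Matrix (Fin a) (Fin b) ℝ) : ℝ := ∑ j, sqnorm (colv B j)

/-- `x` has at most `r` nonzero coordinates. -/
def sparse {k : ℕ} (r : ℕ) (x : Fin k → ℝ) : Prop := (Function.support x).ncard ≤ r

/-- `H` is the orthogonal projection matrix of `ℝ^m` onto `span{φ_j : j ∈ M}`:
symmetric, idempotent, with range equal to the span of the columns of `Φ` indexed by `M`. -/
def IsProjOnto {m p : ℕ} (Φ : Matrix (Fin m) (Fin p) ℝ) (M : Finset (Fin p))
    (H : Matrix (Fin m) (Fin m) ℝ) : Prop :=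
  H.IsSymm ∧ H * H = H ∧
    LinearMap.range H.mulVecLin = Submodule.span ℝ (colv Φ '' (M : Set (Fin p)))

/-- `Ψ = A (AᵀA)⁻¹ Φ`. -/
def Psi {n m p : ℕ} (A : Matrix (Fin n) (Fin m) ℝ) (Φ : Matrix (Fin m) (Fin p) ℝ) :
    Matrix (Fin n) (Fin p) ℝ := A * (Aᵀ * A)⁻¹ * Φ

/-- `z = (AᵀA)⁻¹ Aᵀ y` where `y = A f + σ e`. -/
def zv {n m : ℕ} (A : Matrix (Fin n) (Fin m) ℝ) (f : Fin m → ℝ) (σ : ℝ) (e : Fin n → ℝ) :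
    Fin m → ℝ := ((Aᵀ * A)⁻¹ * Aᵀ).mulVec (A.mulVec f + σ • e)

/-- `ξ = (AᵀA)⁻¹ Aᵀ e`. -/
def xiv {n m : ℕ} (A : Matrix (Fin n) (Fin m) ℝ) (e : Fin n → ℝ) : Fin m → ℝ :=
  ((Aᵀ * A)⁻¹ * Aᵀ).mulVec e

/-- The collection `𝓜` of models of size at most `r/2`. -/
def models (p r : ℕ) : Finset (Finset (Fin p)) := Finset.univ.filter fun M => 2 * M.card ≤ r

open scoped Classical in
/-- The restricted collection `𝓜_γ = {M ∈ 𝓜 : ‖Ψ_M‖_F² ≤ γ²n}`. -/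
def modelsG {n m p : ℕ} (r : ℕ) (A : Matrix (Fin n) (Fin m) ℝ) (Φ : Matrix (Fin m) (Fin p) ℝ)
    (γ : ℝ) : Finset (Finset (Fin p)) :=
  Finset.univ.filter fun M => 2 * M.card ≤ r ∧ frob2 (restr (Psi A Φ) M) ≤ γ ^ 2 * (n : ℝ)

/-- The aggregated estimator `f̂_θ = ∑_{M ∈ C} θ_M f̂_M`, where `f̂_M = H_M z`. -/
def aggEst {m p : ℕ} (C : Finset (Finset (Fin p)))
    (H : Finset (Fin p) → Matrix (Fin m) (Fin m) ℝ) (zvec : Fin m → ℝ)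
    (θ : Finset (Fin p) → ℝ) : Fin m → ℝ :=
  ∑ M ∈ C, θ M • (H M).mulVec zvec

/-- The penalty `U_M = 4σ²(δ+1)ν_r⁻² ‖Ψ_M‖_F² ln p`. -/
def Ufun {n m p : ℕ} (A : Matrix (Fin n) (Fin m) ℝ) (Φ : Matrix (Fin m) (Fin p) ℝ)
    (σ δ ν2 : ℝ) (M : Finset (Fin p)) : ℝ :=
  4 * σ ^ 2 * (δ + 1) / ν2 * frob2 (restr (Psi A Φ) M) * Real.log p

/-- The Q-aggregation criterion (with `α = 1/2`, multiplied by 2):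
`∑_M θ_M (‖z - f̂_M‖² + 2U_M) + ‖z - f̂_θ‖²`. -/
def aggCrit {m p : ℕ} (C : Finset (Finset (Fin p)))
    (H : Finset (Fin p) → Matrix (Fin m) (Fin m) ℝ) (zvec : Fin m → ℝ)
    (U : Finset (Fin p) → ℝ) (θ : Finset (Fin p) → ℝ) : ℝ :=
  ∑ M ∈ C, θ M * (sqnorm (zvec - (H M).mulVec zvec) + 2 * U M) +
    sqnorm (zvec - aggEst C H zvec θ)

section AuxGaussian
open Real Filter

lemma gaussianPDFReal_conv (v w : NNReal) (hv : v ≠ 0) (hw : w ≠ 0) (x y : ℝ) :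
    gaussianPDFReal 0 v x * gaussianPDFReal x w y =
      gaussianPDFReal 0 (v + w) y *
        gaussianPDFReal ((v : ℝ) * y / ((v : ℝ) + w)) (v * w / (v + w)) x := by
  have hv' : (0:ℝ) < v := NNReal.coe_pos.2 (pos_iff_ne_zero.2 hv)
  have hw' : (0:ℝ) < w := NNReal.coe_pos.2 (pos_iff_ne_zero.2 hw)
  have hvw : (0:ℝ) < (v:ℝ) + w := by positivity
  simp only [gaussianPDFReal, NNReal.coe_add, NNReal.coe_div, NNReal.coe_mul, sub_zero]
  rw [mul_mul_mul_comm, mul_mul_mul_comm ((√(2*π*((v:ℝ)+w)))⁻¹), ← Real.exp_add, ← Real.exp_add,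
      ← mul_inv, ← mul_inv, ← Real.sqrt_mul (by positivity), ← Real.sqrt_mul (by positivity)]
  have hπ := Real.pi_pos
  congr 2
  · field_simp
  · field_simp
    ring

lemma gaussian_map_add (v w : NNReal) :
    Measure.map (fun q : ℝ × ℝ => q.1 + q.2) ((gaussianReal 0 v).prod (gaussianReal 0 w)) =
      gaussianReal 0 (v + w) := by
  by_cases hv : v = 0
  · subst hv
    rw [gaussianReal_zero_var, Measure.dirac_prod, Measure.map_map (by fun_prop) (by fun_prop)]
    have : ((fun q : ℝ × ℝ => q.1 + q.2) ∘ Prod.mk (0:ℝ)) = id := by funext y; simp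
    rw [this, Measure.map_id, zero_add]
  by_cases hw : w = 0
  · subst hw
    rw [gaussianReal_zero_var, Measure.prod_dirac, Measure.map_map (by fun_prop) (by fun_prop)]
    have : ((fun q : ℝ × ℝ => q.1 + q.2) ∘ fun x : ℝ => (x, (0:ℝ))) = id := by funext y; simp
    rw [this, Measure.map_id, add_zero]
  have hvw : v + w ≠ 0 := by simp [hv]
  have hmw : Measurable (fun q : ℝ × ℝ => gaussianPDF q.1 w q.2) := by
    have : (fun q : ℝ × ℝ => gaussianPDF q.1 w q.2) =
        fun q : ℝ × ℝ => gaussianPDF 0 w (q.2 - q.1) := by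
      funext q; simp only [gaussianPDF, gaussianPDFReal]; norm_num
    rw [this]
    exact (measurable_gaussianPDF 0 w).comp (by fun_prop)
  ext s hs
  rw [Measure.map_apply (by fun_prop) hs, Measure.prod_apply (hs.preimage (by fun_prop))]
  have h2 : ∀ x : ℝ, gaussianReal 0 w (Prod.mk x ⁻¹' ((fun q : ℝ × ℝ => q.1 + q.2) ⁻¹' s))
      = gaussianReal x w s := by
    intro x
    have : (Prod.mk x ⁻¹' ((fun q : ℝ × ℝ => q.1 + q.2) ⁻¹' s)) = (x + ·) ⁻¹' s := rfl
    rw [this, ← Measure.map_apply (by fun_prop) hs, gaussianReal_map_const_add x, zero_add]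
  simp_rw [h2]
  have h3 : ∀ x : ℝ, gaussianReal x w s = ∫⁻ y in s, gaussianPDF x w y :=
    fun x => gaussianReal_apply x hw s
  simp_rw [h3]
  rw [gaussianReal_of_var_ne_zero _ hv,
    lintegral_withDensity_eq_lintegral_mul _ (measurable_gaussianPDF _ _) (by
      apply Measurable.lintegral_prod_right (f := fun x y => gaussianPDF x w y)
      exact hmw)]
  simp only [Pi.mul_apply]
  calc ∫⁻ x, gaussianPDF 0 v x * ∫⁻ y in s, gaussianPDF x w y ∂volume
      = ∫⁻ x, ∫⁻ y in s, gaussianPDF 0 v x * gaussianPDF x w y ∂volume := by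
        refine lintegral_congr fun x => ?_
        rw [lintegral_const_mul _ (measurable_gaussianPDF _ _)]
    _ = ∫⁻ y in s, ∫⁻ x, gaussianPDF 0 v x * gaussianPDF x w y ∂volume ∂volume := by
        apply lintegral_lintegral_swap
        exact (((measurable_gaussianPDF 0 v).comp measurable_fst).mul hmw).aemeasurable
    _ = ∫⁻ y in s, gaussianPDF 0 (v + w) y ∂volume := by
        refine setLIntegral_congr_fun hs (fun y _ => ?_)
        have key : ∀ x, gaussianPDF 0 v x * gaussianPDF x w y =
            gaussianPDF 0 (v + w) y * gaussianPDF ((v:ℝ) * y / ((v:ℝ) + w)) (v * w / (v + w)) x := by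
          intro x
          simp only [gaussianPDF]
          rw [← ENNReal.ofReal_mul (gaussianPDFReal_nonneg _ _ _),
            ← ENNReal.ofReal_mul (gaussianPDFReal_nonneg _ _ _),
            gaussianPDFReal_conv v w hv hw x y]
        simp_rw [key]
        rw [lintegral_const_mul _ (measurable_gaussianPDF _ _),
          lintegral_gaussianPDF_eq_one _ (by positivity), mul_one]
    _ = gaussianReal 0 (v + w) s := (gaussianReal_apply _ hvw s).symm

lemma gaussian_pi_map_sum : ∀ (n : ℕ) (a : Fin n → ℝ),
    Measure.map (fun u : Fin n → ℝ => ∑ i, a i * u i)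
        (Measure.pi fun _ : Fin n => gaussianReal 0 1) =
      gaussianReal 0 (∑ i, ‖a i‖₊ ^ 2) := by
  intro n
  induction n with
  | zero =>
    intro a
    have : (fun u : Fin 0 → ℝ => ∑ i, a i * u i) = fun _ => (0:ℝ) := by
      funext u; simp
    rw [this, Measure.map_const]
    simp
  | succ n ih =>
    intro a
    have hmp := measurePreserving_piFinSuccAbove (fun _ : Fin (n+1) => gaussianReal 0 1) 0
    set e := MeasurableEquiv.piFinSuccAbove (fun _ : Fin (n+1) => ℝ) 0 with he
    have hcomp : (fun u : Fin (n+1) → ℝ => ∑ i, a i * u i) =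
        ((fun q : ℝ × ℝ => q.1 + q.2) ∘
          (Prod.map (fun t : ℝ => a 0 * t) (fun u : Fin n → ℝ => ∑ i, a (Fin.succ i) * u i))) ∘ e := by
      funext u
      simp [e, MeasurableEquiv.piFinSuccAbove, Fin.removeNth, Fin.zero_succAbove,
        Fin.sum_univ_succ, Fin.insertNthEquiv, Fin.tail]
    have hm1 : Measurable fun t : ℝ => a 0 * t := by fun_prop
    have hm2 : Measurable fun u : Fin n → ℝ => ∑ i, a (Fin.succ i) * u i := by
      apply Finset.measurable_sum
      intro i _
      exact (measurable_pi_apply i).const_mul _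
    rw [hcomp, ← Measure.map_map (by fun_prop) e.measurable, hmp.map_eq,
      ← Measure.map_map (by fun_prop) (hm1.prodMap hm2),
      ← Measure.map_prod_map _ _ hm1 hm2]
    have hmul : Measure.map (fun t : ℝ => a 0 * t) (gaussianReal 0 1) =
        gaussianReal 0 (‖a 0‖₊ ^ 2) := by
      rw [show (fun t : ℝ => a 0 * t) = (a 0 * ·) from rfl, gaussianReal_map_const_mul]
      congr 1
      · simp
      · ext : 1
        simp [Real.norm_eq_abs, sq_abs]
    rw [hmul, ih, gaussian_map_add]
    congr 1
    rw [Fin.sum_univ_succ]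

lemma integral_Ioi_mul_exp (b c : ℝ) (hb : 0 < b) :
    ∫ y in Set.Ioi c, y * Real.exp (-b * y ^ 2) = Real.exp (-b * c ^ 2) / (2 * b) := by
  have h : ∀ y : ℝ, HasDerivAt (fun y : ℝ => -(Real.exp (-b * y ^ 2)) / (2 * b))
      (y * Real.exp (-b * y ^ 2)) y := by
    intro y
    have h1 : HasDerivAt (fun y : ℝ => -b * y ^ 2) (-b * (2 * y)) y := by
      simpa using ((hasDerivAt_pow 2 y).const_mul (-b))
    have h2 := (h1.exp).neg.div_const (2 * b)
    exact h2.congr_deriv (by rw [div_eq_iff (by positivity)]; ring)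
  have htend : Tendsto (fun y : ℝ => -(Real.exp (-b * y ^ 2)) / (2 * b)) atTop (nhds 0) := by
    have : Tendsto (fun y : ℝ => -b * y ^ 2) atTop atBot := by
      apply Tendsto.const_mul_atTop_of_neg (by linarith)
      exact tendsto_pow_atTop (by norm_num)
    have := (Real.tendsto_exp_atBot.comp this).neg.div_const (2 * b)
    simpa using this
  have hint : MeasureTheory.IntegrableOn (fun y : ℝ => y * Real.exp (-b * y ^ 2)) (Set.Ioi c) :=
    (integrable_mul_exp_neg_mul_sq hb).integrableOn
  have := MeasureTheory.integral_Ioi_of_hasDerivAt_of_tendsto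
    (h c).continuousAt.continuousWithinAt (fun x _ => h x) hint htend
  rw [this]
  field_simp
  ring

lemma gaussian_tail_Ioi (v : NNReal) (hv : v ≠ 0) (c : ℝ) (hc : 0 < c) :
    gaussianReal 0 v {y : ℝ | c < y} ≤
      ENNReal.ofReal ((Real.sqrt (2 * π * v))⁻¹ * ((v : ℝ) / c) * Real.exp (-c ^ 2 / (2 * v))) := by
  have hv' : (0:ℝ) < v := NNReal.coe_pos.2 (pos_iff_ne_zero.2 hv)
  have hb : (0:ℝ) < (2 * (v:ℝ))⁻¹ := by positivity
  rw [gaussianReal_apply_eq_integral 0 hv]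
  apply ENNReal.ofReal_le_ofReal
  have hset : {y : ℝ | c < y} = Set.Ioi c := rfl
  rw [hset]
  set K : ℝ := (Real.sqrt (2 * π * v))⁻¹ with hK
  have hK0 : 0 < K := by rw [hK]; positivity
  have hpdf : ∀ y : ℝ, gaussianPDFReal 0 v y = K * Real.exp (-(2 * (v:ℝ))⁻¹ * y ^ 2) := by
    intro y
    rw [gaussianPDFReal]
    congr 1
    rw [sub_zero]
    congr 1
    field_simp
  calc ∫ y in Set.Ioi c, gaussianPDFReal 0 v y
      ≤ ∫ y in Set.Ioi c, (K / c) * (y * Real.exp (-(2 * (v:ℝ))⁻¹ * y ^ 2)) := by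
        apply setIntegral_mono_on
        · exact (integrable_gaussianPDFReal 0 v).integrableOn
        · exact ((integrable_mul_exp_neg_mul_sq hb).integrableOn).const_mul _
        · exact measurableSet_Ioi
        · intro y hy
          rw [hpdf y]
          have hy' : c < y := hy
          have h1 : (1:ℝ) ≤ y / c := (one_le_div hc).2 hy'.le
          have : K * Real.exp (-(2 * (v:ℝ))⁻¹ * y ^ 2) * 1 ≤
              K * Real.exp (-(2 * (v:ℝ))⁻¹ * y ^ 2) * (y / c) := by
            apply mul_le_mul_of_nonneg_left h1 (by positivity)
          calc K * Real.exp (-(2 * (v:ℝ))⁻¹ * y ^ 2)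
              = K * Real.exp (-(2 * (v:ℝ))⁻¹ * y ^ 2) * 1 := by ring
            _ ≤ K * Real.exp (-(2 * (v:ℝ))⁻¹ * y ^ 2) * (y / c) := this
            _ = (K / c) * (y * Real.exp (-(2 * (v:ℝ))⁻¹ * y ^ 2)) := by ring
    _ = K * ((v:ℝ) / c) * Real.exp (-c ^ 2 / (2 * v)) := by
        rw [MeasureTheory.integral_const_mul, integral_Ioi_mul_exp _ _ hb]
        rw [show -(2 * (v:ℝ))⁻¹ * c ^ 2 = -c ^ 2 / (2 * v) from by field_simp]
        field_simp

lemma gaussian_tail_abs (v : NNReal) (hv : v ≠ 0) (c : ℝ) (hc : Real.sqrt v ≤ c) :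
    gaussianReal 0 v {y : ℝ | c < |y|} ≤
      ENNReal.ofReal (Real.sqrt (2 / π) * Real.exp (-c ^ 2 / (2 * v))) := by
  have hv' : (0:ℝ) < v := NNReal.coe_pos.2 (pos_iff_ne_zero.2 hv)
  have hc0 : 0 < c := lt_of_lt_of_le (Real.sqrt_pos.2 hv') hc
  -- symmetry
  have hneg : Measure.map (fun y : ℝ => -y) (gaussianReal 0 v) = gaussianReal 0 v := by
    rw [show (fun y : ℝ => -y) = ((-1:ℝ) * ·) from by funext y; ring, gaussianReal_map_const_mul]
    norm_num
  have hsymm : gaussianReal 0 v {y : ℝ | y < -c} = gaussianReal 0 v {y : ℝ | c < y} := by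
    conv_rhs => rw [← hneg]
    rw [Measure.map_apply (by fun_prop) (show MeasurableSet {y : ℝ | c < y} from measurableSet_Ioi)]
    congr 1
    ext y
    simp only [Set.mem_preimage, Set.mem_setOf_eq, Set.mem_Ioi]
    constructor <;> intro h <;> linarith
  have hunion : {y : ℝ | c < |y|} ⊆ {y : ℝ | c < y} ∪ {y : ℝ | y < -c} := by
    intro y hy
    rcases abs_cases y with ⟨h1, _⟩ | ⟨h1, _⟩
    · left; simpa [h1] using hy
    · right; simp only [Set.mem_setOf_eq] at hy ⊢; linarith [hy, h1.symm ▸ hy]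
  have hside := gaussian_tail_Ioi v hv c hc0
  have hKbound : (Real.sqrt (2 * π * v))⁻¹ * ((v : ℝ) / c) ≤ Real.sqrt (2 / π) / 2 := by
    have hπ := Real.pi_pos
    have h1 : Real.sqrt (2 * π * (v:ℝ)) = Real.sqrt (2 * π) * Real.sqrt v := by
      rw [← Real.sqrt_mul (by positivity)]
    have h2 : Real.sqrt (2 / π) = 2 / Real.sqrt (2 * π) := by
      rw [show (2:ℝ) / π = (2 * 2) / (2 * π) from by rw [mul_div_mul_left _ _ (two_ne_zero)],
        Real.sqrt_div' _ (by positivity),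
        show (2:ℝ) * 2 = 2^2 from by norm_num, Real.sqrt_sq (by norm_num)]
    rw [h1, h2]
    have hs2π : (0:ℝ) < Real.sqrt (2 * π) := Real.sqrt_pos.2 (by positivity)
    have hsv : (0:ℝ) < Real.sqrt v := Real.sqrt_pos.2 hv'
    rw [mul_inv, mul_assoc,
      show (2:ℝ) / Real.sqrt (2*π) / 2 = (Real.sqrt (2*π))⁻¹ * 1 from by
        rw [mul_one, div_div, mul_comm, ← div_div, div_self (two_ne_zero), one_div]]
    apply mul_le_mul_of_nonneg_left _ (by positivity)
    have key : (Real.sqrt (v:ℝ))⁻¹ * ((v:ℝ)/c) = Real.sqrt (v:ℝ)/c := by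
      have hms := Real.mul_self_sqrt (v.2 : (0:ℝ) ≤ (v:ℝ))
      field_simp
      exact (Real.sq_sqrt v.2).symm
    rw [key]
    exact div_le_one_of_le₀ hc hc0.le
  calc gaussianReal 0 v {y : ℝ | c < |y|}
      ≤ gaussianReal 0 v ({y : ℝ | c < y} ∪ {y : ℝ | y < -c}) := measure_mono hunion
    _ ≤ gaussianReal 0 v {y : ℝ | c < y} + gaussianReal 0 v {y : ℝ | y < -c} :=
        measure_union_le _ _
    _ = gaussianReal 0 v {y : ℝ | c < y} + gaussianReal 0 v {y : ℝ | c < y} := by rw [hsymm]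
    _ ≤ ENNReal.ofReal ((Real.sqrt (2 * π * v))⁻¹ * ((v : ℝ) / c) * Real.exp (-c ^ 2 / (2 * v))) +
        ENNReal.ofReal ((Real.sqrt (2 * π * v))⁻¹ * ((v : ℝ) / c) * Real.exp (-c ^ 2 / (2 * v))) :=
        add_le_add hside hside
    _ ≤ ENNReal.ofReal (Real.sqrt (2 / π) * Real.exp (-c ^ 2 / (2 * v))) := by
        rw [← ENNReal.ofReal_add (by positivity) (by positivity)]
        apply ENNReal.ofReal_le_ofReal
        have : (Real.sqrt (2*π*(v:ℝ)))⁻¹ * ((v:ℝ)/c) * Real.exp (-c^2/(2*v)) +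
            (Real.sqrt (2*π*(v:ℝ)))⁻¹ * ((v:ℝ)/c) * Real.exp (-c^2/(2*v)) =
            2 * ((Real.sqrt (2*π*(v:ℝ)))⁻¹ * ((v:ℝ)/c)) * Real.exp (-c^2/(2*v)) := by ring
        rw [this]
        apply mul_le_mul_of_nonneg_right _ (Real.exp_nonneg _)
        linarith [hKbound]

end AuxGaussian

/-- Lemma 1: for any `x > 0`, with probability at least `1 - √(2/π) e^{-x}`,
simultaneously for all models `M ∈ 𝓜`, `‖Ψ_Mᵀ η‖² ≤ 2σ²‖Ψ_M‖_F²(ln p + x)`,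
where `η = σε`. -/
theorem lemma1_gaussian_uniform_bound
    {n p : ℕ} (hp : 2 ≤ p) (σ : ℝ) (hσ : 0 < σ)
    (Ψ : Matrix (Fin n) (Fin p) ℝ) (Mcal : Set (Finset (Fin p)))
    {Ω : Type*} [MeasurableSpace Ω] (μ : Measure Ω) [IsProbabilityMeasure μ]
    (ε : Ω → Fin n → ℝ) (hεmeas : Measurable ε)
    (hεdist : Measure.map ε μ = Measure.pi fun _ : Fin n => gaussianReal 0 1)
    (x : ℝ) (hx : 0 < x) :
    ENNReal.ofReal (1 - Real.sqrt (2 / Real.pi) * Real.exp (-x)) ≤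
      μ {ω | ∀ M ∈ Mcal,
        sqnorm ((restr Ψ M)ᵀ.mulVec (σ • ε ω)) ≤
          2 * σ ^ 2 * frob2 (restr Ψ M) * (Real.log p + x)} := by
  classical
  set L : ℝ := Real.log p + x with hLdef
  have hp0 : (0:ℝ) < p := by positivity
  have hp1 : (2:ℝ) ≤ (p:ℝ) := by exact_mod_cast hp
  have hlog2 : Real.log 2 ≤ Real.log p := Real.log_le_log (by norm_num) hp1
  have hlog2' : (0.6931471803 : ℝ) < Real.log 2 := Real.log_two_gt_d9
  have hL1 : 1 ≤ 2 * L := by rw [hLdef]; nlinarith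
  have hLpos : 0 < L := by nlinarith
  set S : Fin p → Ω → ℝ := fun j ω => ∑ i, Ψ i j * ε ω i with hSdef
  have hSmeas : ∀ j, Measurable (S j) := by
    intro j
    apply Finset.measurable_sum
    intro i _
    exact ((measurable_pi_apply i).comp hεmeas).const_mul _
  set G : Set Ω := {ω | ∀ j : Fin p, (S j ω)^2 ≤ 2 * sqnorm (colv Ψ j) * L} with hGdef
  have hGmeas : MeasurableSet G := by
    rw [hGdef, Set.setOf_forall]
    exact MeasurableSet.iInter fun j =>
      measurableSet_le ((hSmeas j).pow_const 2) measurable_const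
  -- inclusion into the target event
  have hsub : G ⊆ {ω | ∀ M ∈ Mcal,
      sqnorm ((restr Ψ M)ᵀ.mulVec (σ • ε ω)) ≤
        2 * σ ^ 2 * frob2 (restr Ψ M) * L} := by
    intro ω hω M _
    have hterm : ∀ j, (restr Ψ M)ᵀ.mulVec (σ • ε ω) j =
        if j ∈ M then σ * S j ω else 0 := by
      intro j
      simp only [Matrix.mulVec, dotProduct, Matrix.transpose_apply, restr,
        Pi.smul_apply, smul_eq_mul]
      split_ifs with hj
      · rw [hSdef, Finset.mul_sum]
        exact Finset.sum_congr rfl fun i _ => by ring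
      · simp
    have hfrob : frob2 (restr Ψ M) = ∑ j, if j ∈ M then sqnorm (colv Ψ j) else 0 := by
      unfold frob2
      refine Finset.sum_congr rfl fun j _ => ?_
      simp only [sqnorm, colv, restr]
      split_ifs with hj
      · rfl
      · simp
    have hLHS : sqnorm ((restr Ψ M)ᵀ.mulVec (σ • ε ω)) =
        ∑ j, (if j ∈ M then σ * S j ω else 0)^2 := by
      unfold sqnorm
      exact Finset.sum_congr rfl fun j _ => by rw [hterm j]
    rw [hLHS, hfrob, Finset.mul_sum, Finset.sum_mul]
    apply Finset.sum_le_sum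
    intro j _
    split_ifs with hj
    · have h1 := hω j
      have h2 : 0 ≤ sqnorm (colv Ψ j) := Finset.sum_nonneg fun i _ => sq_nonneg _
      nlinarith [sq_nonneg (S j ω), sq_nonneg σ]
    · simp
  -- complement bound
  set a : ℝ := Real.sqrt (2 / Real.pi) * Real.exp (-x) with hadef
  have ha0 : 0 ≤ a := by positivity
  have hBj : ∀ j : Fin p,
      μ {ω | 2 * sqnorm (colv Ψ j) * L < (S j ω)^2} ≤ ENNReal.ofReal (a / p) := by
    intro j
    by_cases hvj : sqnorm (colv Ψ j) = 0
    · have hzero : ∀ i, Ψ i j = 0 := by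
        intro i
        have := (Finset.sum_eq_zero_iff_of_nonneg (fun i _ => sq_nonneg (colv Ψ j i))).1 hvj
          i (Finset.mem_univ i)
        have := pow_eq_zero_iff (n := 2) (by norm_num) |>.1 this
        simpa [colv] using this
      have hSz : ∀ ω, S j ω = 0 := by
        intro ω; rw [hSdef]; exact Finset.sum_eq_zero fun i _ => by rw [hzero i]; ring
      have : {ω | 2 * sqnorm (colv Ψ j) * L < (S j ω)^2} = ∅ := by
        ext ω; simp [hSz ω, hvj]
      rw [this]
      simp
    · set V : NNReal := ∑ i, ‖Ψ i j‖₊ ^ 2 with hVdef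
      have hVcoe : ((V:ℝ)) = sqnorm (colv Ψ j) := by
        rw [hVdef]
        push_cast
        simp [sqnorm, colv, Real.norm_eq_abs, sq_abs]
      have hV : V ≠ 0 := by
        intro h
        apply hvj
        rw [← hVcoe, h]; simp
      have hV' : (0:ℝ) < V := NNReal.coe_pos.2 (pos_iff_ne_zero.2 hV)
      set c : ℝ := Real.sqrt (2 * V * L) with hcdef
      have hc0 : 0 < c := Real.sqrt_pos.2 (by positivity)
      have hc2 : c^2 = 2 * V * L := Real.sq_sqrt (by positivity)
      have hcge : Real.sqrt V ≤ c := by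
        apply Real.sqrt_le_sqrt
        nlinarith
      have hmapS : Measure.map (S j) μ = gaussianReal 0 V := by
        have : S j = (fun u : Fin n → ℝ => ∑ i, Ψ i j * u i) ∘ ε := rfl
        rw [this, ← Measure.map_map (by
          apply Finset.measurable_sum; intro i _; exact (measurable_pi_apply i).const_mul _)
          hεmeas, hεdist, gaussian_pi_map_sum]
      have hsetB : {ω | 2 * sqnorm (colv Ψ j) * L < (S j ω)^2} =
          (S j) ⁻¹' {y : ℝ | c < |y|} := by
        ext ω
        simp only [Set.mem_setOf_eq, Set.mem_preimage]
        rw [← hVcoe]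
        constructor
        · intro h
          by_contra hcon
          push_neg at hcon
          nlinarith [sq_abs (S j ω), abs_nonneg (S j ω)]
        · intro h
          nlinarith [sq_abs (S j ω), abs_nonneg (S j ω)]
      have hms : MeasurableSet {y : ℝ | c < |y|} :=
        measurableSet_lt measurable_const (measurable_id.abs)
      rw [hsetB, ← Measure.map_apply (hSmeas j) hms, hmapS]
      have htail := gaussian_tail_abs V hV c hcge
      refine le_trans htail (ENNReal.ofReal_le_ofReal ?_)
      have hexp : Real.exp (-c^2 / (2 * V)) = Real.exp (-x) / p := by
        rw [hc2, show -(2 * (V:ℝ) * L) / (2 * V) = -L from by field_simp, hLdef,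
          neg_add, Real.exp_add, Real.exp_neg, Real.exp_log hp0]
        ring
      rw [hexp, hadef, mul_div_assoc]
  have hcompl : μ Gᶜ ≤ ENNReal.ofReal a := by
    have hsubc : Gᶜ ⊆ ⋃ j, {ω | 2 * sqnorm (colv Ψ j) * L < (S j ω)^2} := by
      intro ω hω
      simp only [hGdef, Set.mem_compl_iff, Set.mem_setOf_eq, not_forall, not_le] at hω
      obtain ⟨j, hj⟩ := hω
      exact Set.mem_iUnion.2 ⟨j, hj⟩
    calc μ Gᶜ ≤ ∑' j : Fin p, μ {ω | 2 * sqnorm (colv Ψ j) * L < (S j ω)^2} :=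
          (measure_mono hsubc).trans (measure_iUnion_le _)
      _ = ∑ j : Fin p, μ {ω | 2 * sqnorm (colv Ψ j) * L < (S j ω)^2} := tsum_fintype _
      _ ≤ ∑ _j : Fin p, ENNReal.ofReal (a / p) := Finset.sum_le_sum fun j _ => hBj j
      _ = (p : ℕ) • ENNReal.ofReal (a / p) := by
          rw [Finset.sum_const, Finset.card_univ, Fintype.card_fin]
      _ = ENNReal.ofReal a := by
          rw [nsmul_eq_mul, ← ENNReal.ofReal_natCast p, ← ENNReal.ofReal_mul (by positivity)]
          congr 1
          field_simp
  calc ENNReal.ofReal (1 - a) = 1 - ENNReal.ofReal a := by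
        rw [ENNReal.ofReal_sub _ ha0, ENNReal.ofReal_one]
    _ ≤ 1 - μ Gᶜ := tsub_le_tsub_left hcompl 1
    _ = μ G := by
        have h := prob_compl_eq_one_sub (μ := μ) hGmeas.compl
        rw [compl_compl] at h
        exact h.symm
    _ ≤ _ := measure_mono hsub
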